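/- If a regular language L has polynomial growth (there exists k such that the number of words of length n in L is O(n^k)), then adh(L) is countable and every element of adh(L) is ultimately periodic. -/

import Mathlib

/-- `l` is a prefix of the infinite word `w`. -/
def IsPrefixOfInf {α : Type*} (l : List α) (w : ℕ → α) : Prop :=
  ∀ (i : ℕ) (h : i < l.length), l[i] = w i

/-- `b` is the image of the infinite word `a` under the morphism `γ`
(extended to infinite words by concatenation). -/
def IsInfImage {α β : Type*} (γ : α → List β) (a : ℕ → α) (b : ℕ → β) : Prop :=
  ∀ n : ℕ, IsPrefixOfInf (((List.range n).map a).flatMap γ) b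

/-- `w = y · z^ω`. -/
def UltPeriodicWith {α : Type*} (w : ℕ → α) (y z : List α) : Prop :=
  z ≠ [] ∧ ∀ m : ℕ, IsPrefixOfInf (y ++ (List.replicate m z).flatten) w

def UltimatelyPeriodic {α : Type*} (w : ℕ → α) : Prop :=
  ∃ y z : List α, UltPeriodicWith w y z

/-- `x` is a (finite, contiguous) factor of the infinite word `w`. -/
def InfFactorOf {α : Type*} (x : List α) (w : ℕ → α) : Prop :=
  ∃ i : ℕ, x = List.ofFn fun j : Fin x.length => w (i + j)

/-- adherence of a language -/
def Adherence {α : Type*} (L : Set (List α)) : Set (ℕ → α) :=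
  {x | ∀ n : ℕ, ∃ w ∈ L, (List.ofFn fun i : Fin n => x i) <+: w}



lemma aux_two_mul (t : ℕ) (h : 3 ≤ t) : 2*t+2 ≤ 2^t := by
  induction t with
  | zero => omega
  | succ n ih =>
    rcases Nat.lt_or_ge n 3 with h3 | h3
    · interval_cases n <;> simp_all
    · have := ih h3
      have : 2^n ≥ 4 := by calc 2^n ≥ 2*n+2 := this
                                _ ≥ 4 := by omega
      rw [pow_succ]
      omega

lemma aux_exp_dom (k : ℕ) : ∀ E : ℕ, ∃ N, ∀ m ≥ N, E * (m+1)^k < 2^m := by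
  induction k with
  | zero =>
    intro E
    exact ⟨E + 1, fun m hm => by
      have h1 : E < 2^E := Nat.lt_two_pow_self (n := E)
      have h2 : (2:ℕ)^E ≤ 2^m := Nat.pow_le_pow_right (by norm_num) (by omega)
      simpa using lt_of_lt_of_le h1 h2⟩
  | succ k ih =>
    intro E
    obtain ⟨N, hN⟩ := ih (E * 2^k)
    refine ⟨2*N + 6, fun m hm => ?_⟩
    set t := m / 2 with ht
    have htN : t ≥ N := by omega
    have ht3 : t ≥ 3 := by omega
    have hm1 : m + 1 ≤ 2*(t+1) := by omega
    have hm2t : 2*t ≤ m := by omega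
    have h1 : m + 1 ≤ 2^t := le_trans (by omega : m+1 ≤ 2*t+2) (aux_two_mul t ht3)
    have h2 : E * 2^k * (t+1)^k < 2^t := hN t htN
    calc E * (m+1)^(k+1) = E * (m+1)^k * (m+1) := by ring
      _ ≤ E * (2*(t+1))^k * (m+1) := by
          exact Nat.mul_le_mul_right _ (Nat.mul_le_mul_left _ (Nat.pow_le_pow_left hm1 k))
      _ = E * 2^k * (t+1)^k * (m+1) := by rw [Nat.mul_pow]; ring
      _ < 2^t * (m+1) := by
          have hm1pos : 0 < m + 1 := by omega
          exact (Nat.mul_lt_mul_right hm1pos).mpr h2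
      _ ≤ 2^t * 2^t := by gcongr
      _ = 2^(2*t) := by rw [← pow_add]; ring_nf
      _ ≤ 2^m := Nat.pow_le_pow_right (by norm_num) hm2t


lemma aux_pref_pref {α : Type*} {P u w : List α} (h1 : P <+: w) (h2 : u <+: w)
    (hl : P.length ≤ u.length) : P <+: u := by
  rw [List.prefix_iff_eq_take] at h1 h2
  have : P = u.take P.length := by
    rw [h2, List.take_take, min_eq_left hl]
    exact h1
  rw [this]
  exact List.take_prefix _ _

lemma aux_flatten_rep_mono {α : Type*} (u : List α) {m M : ℕ} (h : m ≤ M) :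
    (List.replicate m u).flatten <+: (List.replicate M u).flatten := by
  have : M = m + (M - m) := by omega
  rw [this, List.replicate_add, List.flatten_append]
  exact ⟨_, rfl⟩

lemma aux_comm_prefix {α : Type*} (u : List α) (hu : u ≠ []) :
    ∀ n (P : List α), P.length ≤ n → P ++ u = u ++ P →
      P <+: (List.replicate P.length u).flatten := by
  intro n
  induction n with
  | zero =>
    intro P hP _
    have : P = [] := List.eq_nil_of_length_eq_zero (by omega)
    simp [this]
  | succ n ih =>
    intro P hP hcomm
    rcases Nat.eq_zero_or_pos P.length with h0 | hpos
    · have : P = [] := List.eq_nil_of_length_eq_zero h0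
      simp [this]
    rcases le_or_gt P.length u.length with hle | hlt
    · -- P <+: u
      have hPu : P <+: u ++ P := ⟨u, by rw [← hcomm]⟩
      have h2 : u <+: u ++ P := ⟨P, rfl⟩
      have hPpref : P <+: u := aux_pref_pref hPu h2 hle
      refine hPpref.trans ?_
      have : (1:ℕ) ≤ P.length := hpos
      have := aux_flatten_rep_mono u this
      simpa using this
    · -- u <+: P
      have hupos : 0 < u.length := List.length_pos_iff.mpr hu
      have hP1 : u <+: P ++ u := ⟨P, hcomm.symm⟩
      have h2 : P <+: P ++ u := ⟨u, rfl⟩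
      have huP : u <+: P := aux_pref_pref hP1 h2 (le_of_lt hlt)
      obtain ⟨P', rfl⟩ := huP
      have hcomm' : P' ++ u = u ++ P' := by
        have h' := hcomm
        rw [List.append_assoc] at h'
        exact List.append_cancel_left h'
      have hlen : P'.length ≤ n := by
        have := List.length_append (as := u) (bs := P')
        omega
      have ihP := ih P' hlen hcomm'
      calc u ++ P' <+: u ++ (List.replicate P'.length u).flatten := ⟨ihP.choose, by rw [List.append_assoc, ihP.choose_spec]⟩
        _ = (List.replicate (P'.length + 1) u).flatten := by
            rw [Nat.add_comm, List.replicate_add, List.flatten_append]; simp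
        _ <+: (List.replicate (u ++ P').length u).flatten := by
            apply aux_flatten_rep_mono
            simp; omega

lemma aux_blocks_inj {α : Type*} {U V : List α} (hlen : U.length = V.length) (hne : U ≠ V) :
    ∀ bs bs' : List Bool, bs.length = bs'.length →
      (bs.map fun b => if b then U else V).flatten = (bs'.map fun b => if b then U else V).flatten →
      bs = bs' := by
  intro bs
  induction bs with
  | nil =>
    intro bs' h _
    cases bs' with
    | nil => rfl
    | cons _ _ => simp at h
  | cons b t ih =>
    intro bs' h heq
    cases bs' with
    | nil => simp at h
    | cons b' t' =>
      simp only [List.map_cons, List.flatten_cons] at heq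
      have hhl : (if b then U else V).length = (if b' then U else V).length := by
        cases b <;> cases b' <;> simp [hlen]
      obtain ⟨h1, h2⟩ := List.append_inj heq hhl
      have hb : b = b' := by
        by_contra hbb
        cases b <;> cases b' <;> simp_all
      subst hb
      have := ih t' (by simpa using h) h2
      rw [this]


lemma aux_len_rep {α : Type*} (u : List α) (m : ℕ) :
    ((List.replicate m u).flatten).length = m * u.length := by
  induction m with
  | zero => simp
  | succ n ih => simp [List.replicate_succ, ih]; ring

lemma aux_pref_inf {α : Type*} {l l' : List α} {x : ℕ → α}
    (h : l <+: l') (h' : ∀ (i : ℕ) (hi : i < l'.length), l'[i] = x i) :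
    ∀ (i : ℕ) (hi : i < l.length), l[i] = x i := by
  obtain ⟨t, rfl⟩ := h
  intro i hi
  have hlt : i < (l ++ t).length := by simp; omega
  rw [← h' i hlt, List.getElem_append_left hi]

lemma aux_ofFn_split {α : Type*} (x : ℕ → α) {i j : ℕ} (h : i ≤ j) :
    (List.ofFn fun t : Fin j => x t) =
      (List.ofFn fun t : Fin i => x t) ++ (List.ofFn fun t : Fin (j - i) => x (i + t)) := by
  apply List.ext_getElem
  · simp; omega
  · intro n h1 h2
    simp only [List.getElem_ofFn]
    rcases Nat.lt_or_ge n i with hn | hn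
    · rw [List.getElem_append_left (by simpa using hn)]
      simp
    · rw [List.getElem_append_right (by simpa using hn)]
      simp only [List.getElem_ofFn, List.length_ofFn]
      congr 1
      omega

lemma aux_determined {α : Type*} {y z : List α} {w w' : ℕ → α} (hz : z ≠ [])
    (h : ∀ m : ℕ, ∀ (i : ℕ) (hi : i < (y ++ (List.replicate m z).flatten).length),
      (y ++ (List.replicate m z).flatten)[i] = w i)
    (h' : ∀ m : ℕ, ∀ (i : ℕ) (hi : i < (y ++ (List.replicate m z).flatten).length),
      (y ++ (List.replicate m z).flatten)[i] = w' i) : w = w' := by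
  funext n
  have hzl : 0 < z.length := List.length_pos_iff.mpr hz
  have hlen : n < (y ++ (List.replicate (n+1) z).flatten).length := by
    simp [aux_len_rep]
    nlinarith
  rw [← h (n+1) n hlen, h' (n+1) n hlen]

lemma aux_cycles_comm {α : Type*} [Fintype α] {σ : Type} [Fintype σ] (M : DFA α σ)
    {k C : ℕ}
    (hC : ∀ n : ℕ, {w ∈ (M.accepts : Set (List α)) | w.length = n}.ncard ≤ C * (n + 1) ^ k)
    {q : σ} {p s u v : List α} (hp : M.evalFrom M.start p = q) (hs : M.evalFrom q s ∈ M.accept)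
    (hu : M.evalFrom q u = q) (hv : M.evalFrom q v = q) :
    u ++ v = v ++ u := by
  by_contra hne
  set U := u ++ v with hU
  set V := v ++ u with hV
  have hUVne : U ≠ V := hne
  have hUV : U.length = V.length := by simp [hU, hV]; omega
  have hl : 0 < U.length := by
    rcases Nat.eq_zero_or_pos U.length with h0 | h
    · exfalso
      apply hUVne
      rw [hU] at h0
      rw [List.length_append] at h0
      have hu0 : u = [] := List.eq_nil_of_length_eq_zero (by omega)
      have hv0 : v = [] := List.eq_nil_of_length_eq_zero (by omega)
      rw [hU, hV, hu0, hv0]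
    · exact h
  have hUq : M.evalFrom q U = q := by rw [hU, DFA.evalFrom_of_append, hu, hv]
  have hVq : M.evalFrom q V = q := by rw [hV, DFA.evalFrom_of_append, hv, hu]
  set blk : Bool → List α := fun b => if b then U else V with hblk
  have hblkq : ∀ b, M.evalFrom q (blk b) = q := by intro b; cases b <;> simpa [hblk]
  have hblkl : ∀ b, (blk b).length = U.length := by intro b; cases b <;> simp [hblk, hUV]
  have hmidq : ∀ bs : List Bool, M.evalFrom q ((bs.map blk).flatten) = q := by
    intro bs
    induction bs with
    | nil => rfl
    | cons b t ih =>
      rw [List.map_cons, List.flatten_cons, DFA.evalFrom_of_append, hblkq, ih]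
  have hmidl : ∀ bs : List Bool, ((bs.map blk).flatten).length = bs.length * U.length := by
    intro bs
    induction bs with
    | nil => simp
    | cons b t ih =>
      rw [List.map_cons, List.flatten_cons, List.length_append, hblkl, ih, List.length_cons]
      ring
  have hmem : ∀ bs : List Bool, (p ++ (((bs.map blk).flatten) ++ s)) ∈ M.accepts := by
    intro bs
    rw [DFA.mem_accepts]
    show M.evalFrom M.start _ ∈ M.accept
    rw [DFA.evalFrom_of_append, hp, DFA.evalFrom_of_append, hmidq]
    exact hs
  -- cardinality lower bound
  have hcard : ∀ m : ℕ,
      2^m ≤ {w ∈ (M.accepts : Set (List α)) | w.length = p.length + (m * U.length + s.length)}.ncard := by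
    intro m
    set T := {w ∈ (M.accepts : Set (List α)) | w.length = p.length + (m * U.length + s.length)} with hT
    have hfin : T.Finite := (List.finite_length_eq α _).subset (fun w hw => hw.2)
    have : Finite ↥T := hfin.to_subtype
    have hFmem : ∀ f : Fin m → Bool, (p ++ ((((List.ofFn f).map blk).flatten) ++ s)) ∈ T := by
      intro f
      refine ⟨hmem _, ?_⟩
      rw [List.length_append, List.length_append, hmidl, List.length_ofFn]
    set F : (Fin m → Bool) → ↥T := fun f => ⟨_, hFmem f⟩ with hF
    have hFinj : Function.Injective F := by
      intro f g hfg
      have h1 : (p ++ ((((List.ofFn f).map blk).flatten) ++ s))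
          = (p ++ ((((List.ofFn g).map blk).flatten) ++ s)) := congrArg Subtype.val hfg
      have h2 := List.append_cancel_left h1
      have h3 := List.append_cancel_right h2
      exact List.ofFn_injective (aux_blocks_inj hUV hUVne _ _ (by simp) h3)
    calc (2:ℕ)^m = Nat.card (Fin m → Bool) := by simp
      _ ≤ Nat.card ↥T := Nat.card_le_card_of_injective F hFinj
      _ = T.ncard := Nat.card_coe_set_eq T
  -- numeric contradiction
  obtain ⟨N, hN⟩ := aux_exp_dom k (C * (p.length + s.length + 1 + U.length)^k)
  have h1 := hcard N
  have h2 := hC (p.length + (N * U.length + s.length))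
  have h3 := hN N le_rfl
  have hle : p.length + (N * U.length + s.length) + 1
      ≤ (p.length + s.length + 1 + U.length) * (N + 1) := by nlinarith
  have h4 : C * (p.length + (N * U.length + s.length) + 1)^k
      ≤ C * (p.length + s.length + 1 + U.length)^k * (N+1)^k := by
    rw [mul_assoc, ← mul_pow]
    exact Nat.mul_le_mul_left _ (Nat.pow_le_pow_left hle k)
  omega

theorem stmt9 {α : Type*} [Fintype α] (L : Language α) (hreg : L.IsRegular)
    (hpoly : ∃ k C : ℕ, ∀ n : ℕ,
      {w ∈ (L : Set (List α)) | w.length = n}.ncard ≤ C * (n + 1) ^ k) :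
    (Adherence (L : Set (List α))).Countable ∧
      ∀ x ∈ Adherence (L : Set (List α)), UltimatelyPeriodic x := by
  obtain ⟨σ, fσ, M, hM⟩ := hreg
  obtain ⟨k, C, hC⟩ := hpoly
  subst hM
  -- Part 2: every adherence element is ultimately periodic
  have hUP : ∀ x ∈ Adherence (M.accepts : Set (List α)), UltimatelyPeriodic x := by
    intro x hx
    set pre : ℕ → List α := fun n => List.ofFn (fun i : Fin n => x i) with hpre
    set run : ℕ → σ := fun n => M.evalFrom M.start (pre n) with hrun
    set seg : ℕ → ℕ → List α := fun i j => List.ofFn (fun t : Fin (j - i) => x (i + t)) with hseg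
    have hsplit : ∀ {i j : ℕ}, i ≤ j → pre j = pre i ++ seg i j := fun {i j} h =>
      aux_ofFn_split x h
    have hrunseg : ∀ {i j : ℕ}, i ≤ j → M.evalFrom (run i) (seg i j) = run j := by
      intro i j h
      rw [hrun]
      show M.evalFrom (M.evalFrom M.start (pre i)) (seg i j) = M.evalFrom M.start (pre j)
      rw [← DFA.evalFrom_of_append, ← hsplit h]
    have hlive : ∀ i : ℕ, ∃ s, M.evalFrom (run i) s ∈ M.accept := by
      intro i
      obtain ⟨w, hw, t, hwt⟩ := hx i
      refine ⟨t, ?_⟩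
      have : M.evalFrom M.start w ∈ M.accept := hw
      rw [← hwt, DFA.evalFrom_of_append] at this
      exact this
    have hpreinf : ∀ i : ℕ, IsPrefixOfInf (pre i) x := by
      intro i n hn
      simp [hpre]
    -- a state visited infinitely often
    obtain ⟨q, hq⟩ := Finite.exists_infinite_fiber run
    have hqinf : (run ⁻¹' {q}).Infinite := Set.infinite_coe_iff.mp hq
    obtain ⟨i0, hi0⟩ := hqinf.nonempty
    obtain ⟨i1, hi1q, hi1⟩ := hqinf.exists_gt i0
    have hi0q : run i0 = q := hi0
    -- cycles at q commute
    obtain ⟨s0, hs0⟩ := hlive i0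
    rw [hi0q] at hs0
    have hi1q' : run i1 = q := hi1q
    have hcyc : ∀ P : List α, M.evalFrom q P = q → P ++ seg i0 i1 = seg i0 i1 ++ P := by
      intro P hP
      have husg : M.evalFrom q (seg i0 i1) = q := by
        have h' := hrunseg (le_of_lt hi1)
        rw [hi0q] at h'
        rw [h']
        exact hi1q'
      exact aux_cycles_comm M hC hi0q hs0 hP husg
    set u := seg i0 i1 with hu
    have hulen : u.length = i1 - i0 := by simp [hu, hseg]
    have hune : u ≠ [] := by
      intro h
      rw [h] at hulen
      simp at hulen
      omega
    have hulpos : 0 < u.length := List.length_pos_iff.mpr hune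
    refine ⟨pre i0, u, hune, ?_⟩
    intro m
    -- choose i in the fiber beyond i0 + m * u.length
    obtain ⟨i, hiq, hilt⟩ := hqinf.exists_gt (i0 + m * u.length)
    have hii0 : i0 ≤ i := by omega
    set P := seg i0 i with hP
    have hPlen : P.length = i - i0 := by simp [hP, hseg]
    have hiq' : run i = q := hiq
    have hPq : M.evalFrom q P = q := by
      have h' := hrunseg hii0
      rw [hi0q] at h'
      rw [hP, h']
      exact hiq'
    have hPcomm : P ++ u = u ++ P := hcyc P hPq
    have h1 : P <+: (List.replicate P.length u).flatten :=
      aux_comm_prefix u hune P.length P le_rfl hPcomm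
    have h2 : (List.replicate m u).flatten <+: (List.replicate P.length u).flatten :=
      aux_flatten_rep_mono u (by have := Nat.le_mul_of_pos_right m hulpos; omega : m ≤ P.length)
    have h3 : (List.replicate m u).flatten <+: P := by
      apply aux_pref_pref h2 h1
      rw [aux_len_rep]
      omega
    have h4 : pre i0 ++ (List.replicate m u).flatten <+: pre i := by
      rw [hsplit hii0]
      obtain ⟨t, ht⟩ := h3
      exact ⟨t, by rw [List.append_assoc, ht]⟩
    exact aux_pref_inf h4 (hpreinf i)
  refine ⟨?_, hUP⟩
  -- Part 1: countability
  have hch : ∀ x : ↥(Adherence (M.accepts : Set (List α))),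
      ∃ yz : List α × List α, yz.2 ≠ [] ∧
        ∀ m : ℕ, IsPrefixOfInf (yz.1 ++ (List.replicate m yz.2).flatten) x.1 := by
    rintro ⟨x, hx⟩
    obtain ⟨y, z, hz, hp⟩ := hUP x hx
    exact ⟨(y, z), hz, hp⟩
  choose f hf1 hf2 using hch
  have hfinj : Function.Injective f := by
    intro a b hab
    apply Subtype.ext
    exact aux_determined (hf1 a) (hf2 a) (by rw [hab]; exact hf2 b)
  have : Countable ↥(Adherence (M.accepts : Set (List α))) := hfinj.countable
  exact Set.countable_coe_iff.mp this
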